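/- Let G₁ and G₂ be simple connected graphs with n₁ = |V(G₁)|, n₂ = |V(G₂)| vertices and m₁ = |E(G₁)|, m₂ = |E(G₂)| edges. Then the F-index of the vertex S-join satisfies F(G₁ ∨̇_S G₂) = F(G₁) + F(G₂) + 3n₂M₁(G₁) + 3n₁M₁(G₂) + 6m₁n₂² + 6m₂n₁² + n₁n₂(n₁² + n₂²) + 8m₁. -/

import Mathlib

/-- The subdivision graph `S(G)`: a new vertex is inserted into each edge of `G`
(each edge is replaced by a path of length 2). The inserted vertices form the
right summand `↥G.edgeSet`. -/
def Sgraph {V : Type*} (G : SimpleGraph V) : SimpleGraph (V ⊕ ↥G.edgeSet) where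
  Adj x y :=
    match x, y with
    | Sum.inl v, Sum.inr e => v ∈ (e : Sym2 V)
    | Sum.inr e, Sum.inl v => v ∈ (e : Sym2 V)
    | _, _ => False
  symm := by constructor; rintro (v | e) (w | f) h <;> exact h
  loopless := by constructor; rintro (v | e) h <;> exact h

/-- The graph `R(G)`: obtained from `G` by inserting a new vertex into each edge of `G`
and joining each new vertex to the end vertices of its corresponding edge. -/
def Rgraph {V : Type*} (G : SimpleGraph V) : SimpleGraph (V ⊕ ↥G.edgeSet) where
  Adj x y :=
    match x, y with
    | Sum.inl v, Sum.inl w => G.Adj v w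
    | Sum.inl v, Sum.inr e => v ∈ (e : Sym2 V)
    | Sum.inr e, Sum.inl v => v ∈ (e : Sym2 V)
    | Sum.inr _, Sum.inr _ => False
  symm := by
    constructor
    rintro (v | e) (w | f) h
    · exact G.symm.symm _ _ h
    · exact h
    · exact h
    · exact h
  loopless := by
    constructor
    rintro (v | e) h
    · exact G.loopless.irrefl v h
    · exact h

/-- The graph `Q(G)`: obtained from `G` by inserting a new vertex into each edge of `G`,
then joining by edges those pairs of new vertices lying on adjacent edges of `G`. -/
def Qgraph {V : Type*} (G : SimpleGraph V) : SimpleGraph (V ⊕ ↥G.edgeSet) where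
  Adj x y :=
    match x, y with
    | Sum.inl _, Sum.inl _ => False
    | Sum.inl v, Sum.inr e => v ∈ (e : Sym2 V)
    | Sum.inr e, Sum.inl v => v ∈ (e : Sym2 V)
    | Sum.inr e, Sum.inr f => e ≠ f ∧ ∃ v, v ∈ (e : Sym2 V) ∧ v ∈ (f : Sym2 V)
  symm := by
    constructor
    rintro (v | e) (w | f) h
    · exact h
    · exact h
    · exact h
    · exact ⟨h.1.symm, by obtain ⟨v, h1, h2⟩ := h.2; exact ⟨v, h2, h1⟩⟩
  loopless := by
    constructor
    rintro (v | e) h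
    · exact h
    · exact h.1 rfl

/-- The total graph `T(G)`: obtained from `G` by inserting a new vertex into each edge,
joining each new vertex to the end vertices of its corresponding edge, and joining by
edges those pairs of new vertices lying on adjacent edges of `G`. -/
def Tgraph {V : Type*} (G : SimpleGraph V) : SimpleGraph (V ⊕ ↥G.edgeSet) where
  Adj x y :=
    match x, y with
    | Sum.inl v, Sum.inl w => G.Adj v w
    | Sum.inl v, Sum.inr e => v ∈ (e : Sym2 V)
    | Sum.inr e, Sum.inl v => v ∈ (e : Sym2 V)
    | Sum.inr e, Sum.inr f => e ≠ f ∧ ∃ v, v ∈ (e : Sym2 V) ∧ v ∈ (f : Sym2 V)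
  symm := by
    constructor
    rintro (v | e) (w | f) h
    · exact G.symm.symm _ _ h
    · exact h
    · exact h
    · exact ⟨h.1.symm, by obtain ⟨v, h1, h2⟩ := h.2; exact ⟨v, h2, h1⟩⟩
  loopless := by
    constructor
    rintro (v | e) h
    · exact G.loopless.irrefl v h
    · exact h.1 rfl

/-- The disjoint union of `H` and `K` together with all edges joining a vertex `a` of `H`
with `P a` to every vertex of `K`. -/
def joinOn {A B : Type*} (H : SimpleGraph A) (K : SimpleGraph B) (P : A → Prop) :
    SimpleGraph (A ⊕ B) where
  Adj x y :=
    match x, y with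
    | Sum.inl a, Sum.inl a' => H.Adj a a'
    | Sum.inr b, Sum.inr b' => K.Adj b b'
    | Sum.inl a, Sum.inr _ => P a
    | Sum.inr _, Sum.inl a => P a
  symm := by
    constructor
    rintro (a | b) (a' | b') h
    · exact H.symm.symm _ _ h
    · exact h
    · exact h
    · exact K.symm.symm _ _ h
  loopless := by
    constructor
    rintro (a | b) h
    · exact H.loopless.irrefl a h
    · exact K.loopless.irrefl b h

/-- The vertex S-join `G₁ ∨̇_S G₂`: obtained from `S(G₁)` and `G₂` by joining each vertex
of `V(G₁)` to every vertex of `G₂`. -/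
def vertexSJoin {V₁ V₂ : Type*} (G₁ : SimpleGraph V₁) (G₂ : SimpleGraph V₂) :
    SimpleGraph ((V₁ ⊕ ↥G₁.edgeSet) ⊕ V₂) :=
  joinOn (Sgraph G₁) G₂ (fun x => x.isLeft)

/-- The edge S-join `G₁ ∨̱_S G₂`: obtained from `S(G₁)` and `G₂` by joining each inserted
vertex (each vertex of `I(G₁)`) to every vertex of `G₂`. -/
def edgeSJoin {V₁ V₂ : Type*} (G₁ : SimpleGraph V₁) (G₂ : SimpleGraph V₂) :
    SimpleGraph ((V₁ ⊕ ↥G₁.edgeSet) ⊕ V₂) :=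
  joinOn (Sgraph G₁) G₂ (fun x => x.isRight)

/-- The vertex R-join `G₁ ∨̇_R G₂`. -/
def vertexRJoin {V₁ V₂ : Type*} (G₁ : SimpleGraph V₁) (G₂ : SimpleGraph V₂) :
    SimpleGraph ((V₁ ⊕ ↥G₁.edgeSet) ⊕ V₂) :=
  joinOn (Rgraph G₁) G₂ (fun x => x.isLeft)

/-- The edge R-join `G₁ ∨̱_R G₂`. -/
def edgeRJoin {V₁ V₂ : Type*} (G₁ : SimpleGraph V₁) (G₂ : SimpleGraph V₂) :
    SimpleGraph ((V₁ ⊕ ↥G₁.edgeSet) ⊕ V₂) :=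
  joinOn (Rgraph G₁) G₂ (fun x => x.isRight)

/-- The vertex Q-join `G₁ ∨̇_Q G₂`. -/
def vertexQJoin {V₁ V₂ : Type*} (G₁ : SimpleGraph V₁) (G₂ : SimpleGraph V₂) :
    SimpleGraph ((V₁ ⊕ ↥G₁.edgeSet) ⊕ V₂) :=
  joinOn (Qgraph G₁) G₂ (fun x => x.isLeft)

/-- The edge Q-join `G₁ ∨̱_Q G₂`. -/
def edgeQJoin {V₁ V₂ : Type*} (G₁ : SimpleGraph V₁) (G₂ : SimpleGraph V₂) :
    SimpleGraph ((V₁ ⊕ ↥G₁.edgeSet) ⊕ V₂) :=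
  joinOn (Qgraph G₁) G₂ (fun x => x.isRight)

/-- The vertex T-join `G₁ ∨̇_T G₂`. -/
def vertexTJoin {V₁ V₂ : Type*} (G₁ : SimpleGraph V₁) (G₂ : SimpleGraph V₂) :
    SimpleGraph ((V₁ ⊕ ↥G₁.edgeSet) ⊕ V₂) :=
  joinOn (Tgraph G₁) G₂ (fun x => x.isLeft)

/-- The edge T-join `G₁ ∨̱_T G₂`. -/
def edgeTJoin {V₁ V₂ : Type*} (G₁ : SimpleGraph V₁) (G₂ : SimpleGraph V₂) :
    SimpleGraph ((V₁ ⊕ ↥G₁.edgeSet) ⊕ V₂) :=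
  joinOn (Tgraph G₁) G₂ (fun x => x.isRight)

/-- Degree of a vertex in a graph on a finite vertex type. -/
noncomputable def gdeg {V : Type*} [Finite V] (G : SimpleGraph V) (v : V) : ℕ :=
  haveI : Fintype ↥(G.neighborSet v) := Fintype.ofFinite _
  G.degree v

/-- The forgotten topological index (F-index): `F(G) = ∑_{v ∈ V(G)} d_G(v)³`. -/
noncomputable def Findex {V : Type*} [Finite V] (G : SimpleGraph V) : ℕ :=
  haveI := Fintype.ofFinite V
  ∑ v : V, gdeg G v ^ 3

/-- The first Zagreb index: `M₁(G) = ∑_{v ∈ V(G)} d_G(v)²`. -/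
noncomputable def M1 {V : Type*} [Finite V] (G : SimpleGraph V) : ℕ :=
  haveI := Fintype.ofFinite V
  ∑ v : V, gdeg G v ^ 2

/-- `M₄(G) = ∑_{v ∈ V(G)} d_G(v)⁴`. -/
noncomputable def M4 {V : Type*} [Finite V] (G : SimpleGraph V) : ℕ :=
  haveI := Fintype.ofFinite V
  ∑ v : V, gdeg G v ^ 4

/-- The hyper Zagreb index: `HM(G) = ∑_{uv ∈ E(G)} (d_G(u) + d_G(v))²`. -/
noncomputable def HM {V : Type*} [Finite V] (G : SimpleGraph V) : ℕ :=
  haveI : Fintype ↥G.edgeSet := Fintype.ofFinite _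
  ∑ e : ↥G.edgeSet,
    Sym2.lift ⟨fun u v => (gdeg G u + gdeg G v) ^ 2,
      fun u v => by dsimp only; rw [add_comm]⟩ (e : Sym2 V)

/-- The redefined Zagreb index:
`ReZM(G) = ∑_{uv ∈ E(G)} d_G(u) d_G(v) (d_G(u) + d_G(v))`. -/
noncomputable def ReZM {V : Type*} [Finite V] (G : SimpleGraph V) : ℕ :=
  haveI : Fintype ↥G.edgeSet := Fintype.ofFinite _
  ∑ e : ↥G.edgeSet,
    Sym2.lift ⟨fun u v => gdeg G u * gdeg G v * (gdeg G u + gdeg G v),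
      fun u v => by dsimp only; ring⟩ (e : Sym2 V)

/-- The number of edges of `G`. -/
noncomputable def numEdges {V : Type*} (G : SimpleGraph V) : ℕ :=
  Nat.card ↥G.edgeSet


section Helpers

lemma gdeg_eq_ncard {V : Type*} [Finite V] (G : SimpleGraph V) (v : V) :
    gdeg G v = Nat.card ↥(G.neighborSet v) := by
  letI : Fintype ↥(G.neighborSet v) := Fintype.ofFinite _
  unfold gdeg
  rw [Nat.card_eq_fintype_card, SimpleGraph.card_neighborSet_eq_degree]

lemma Findex_eq_sum {V : Type*} [Fintype V] (G : SimpleGraph V) :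
    Findex G = ∑ v : V, gdeg G v ^ 3 := by
  unfold Findex
  congr!

lemma M1_eq_sum {V : Type*} [Fintype V] (G : SimpleGraph V) :
    M1 G = ∑ v : V, gdeg G v ^ 2 := by
  unfold M1
  congr!

lemma sum_gdeg {V : Type*} [Fintype V] (G : SimpleGraph V) :
    ∑ v : V, gdeg G v = 2 * numEdges G := by
  classical
  have h := G.sum_degrees_eq_twice_card_edges
  have h2 : numEdges G = G.edgeFinset.card := by
    rw [numEdges, Nat.card_eq_fintype_card, SimpleGraph.edgeFinset, Set.toFinset_card]
  rw [h2, ← h]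
  apply Finset.sum_congr rfl
  intro v _
  rw [gdeg_eq_ncard, Nat.card_eq_fintype_card, SimpleGraph.card_neighborSet_eq_degree]

lemma card_inc {V : Type*} [Finite V] (G : SimpleGraph V) (v : V) :
    Nat.card {e : G.edgeSet // v ∈ (e : Sym2 V)} = gdeg G v := by
  classical
  have e1 : {e : G.edgeSet // v ∈ (e : Sym2 V)} ≃ G.incidenceSet v :=
    { toFun := fun x => ⟨x.1.1, x.1.2, x.2⟩
      invFun := fun x => ⟨⟨x.1, x.2.1⟩, x.2.2⟩
      left_inv := fun x => rfl
      right_inv := fun x => rfl }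
  rw [Nat.card_congr (e1.trans (G.incidenceSetEquivNeighborSet v)), ← gdeg_eq_ncard]

lemma card_mem_edge {V : Type*} (G : SimpleGraph V) (e : ↥G.edgeSet) :
    Nat.card {v : V // v ∈ (e : Sym2 V)} = 2 := by
  obtain ⟨s, hs⟩ := e
  induction s using Sym2.ind with
  | _ a b =>
    rw [SimpleGraph.mem_edgeSet] at hs
    have hab : a ≠ b := G.ne_of_adj hs
    have e1 : {v : V // v ∈ (s(a, b) : Sym2 V)} ≃ ↥({a, b} : Set V) :=
      Equiv.subtypeEquivRight (fun v => by simp [Sym2.mem_iff])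
    rw [Nat.card_congr e1, Nat.card_coe_set_eq, Set.ncard_pair hab]

section Degrees

variable {V₁ V₂ : Type*} [Finite V₁] [Finite V₂] (G₁ : SimpleGraph V₁) (G₂ : SimpleGraph V₂)

lemma vsj_nbr_card (u : (V₁ ⊕ ↥G₁.edgeSet) ⊕ V₂) :
    gdeg (vertexSJoin G₁ G₂) u =
      Nat.card {w : V₁ // (vertexSJoin G₁ G₂).Adj u (Sum.inl (Sum.inl w))}
      + Nat.card {e : ↥G₁.edgeSet // (vertexSJoin G₁ G₂).Adj u (Sum.inl (Sum.inr e))}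
      + Nat.card {w : V₂ // (vertexSJoin G₁ G₂).Adj u (Sum.inr w)} := by
  rw [gdeg_eq_ncard]
  have e0 : ↥((vertexSJoin G₁ G₂).neighborSet u) ≃
      ({y : V₁ ⊕ ↥G₁.edgeSet // (vertexSJoin G₁ G₂).Adj u (Sum.inl y)} ⊕
        {w : V₂ // (vertexSJoin G₁ G₂).Adj u (Sum.inr w)}) :=
    Equiv.subtypeSum
  have e1 : {y : V₁ ⊕ ↥G₁.edgeSet // (vertexSJoin G₁ G₂).Adj u (Sum.inl y)} ≃
      ({w : V₁ // (vertexSJoin G₁ G₂).Adj u (Sum.inl (Sum.inl w))} ⊕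
        {e : ↥G₁.edgeSet // (vertexSJoin G₁ G₂).Adj u (Sum.inl (Sum.inr e))}) :=
    Equiv.subtypeSum
  rw [Nat.card_congr (e0.trans (Equiv.sumCongr e1 (Equiv.refl _))), Nat.card_sum, Nat.card_sum]

lemma vsj_deg_left (v : V₁) :
    gdeg (vertexSJoin G₁ G₂) (Sum.inl (Sum.inl v)) = gdeg G₁ v + Nat.card V₂ := by
  rw [vsj_nbr_card]
  have h1 : Nat.card {w : V₁ // (vertexSJoin G₁ G₂).Adj (Sum.inl (Sum.inl v)) (Sum.inl (Sum.inl w))} = 0 := by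
    haveI : IsEmpty {w : V₁ // (vertexSJoin G₁ G₂).Adj (Sum.inl (Sum.inl v)) (Sum.inl (Sum.inl w))} :=
      ⟨fun x => x.2⟩
    exact Nat.card_of_isEmpty
  have h2 : Nat.card {e : ↥G₁.edgeSet // (vertexSJoin G₁ G₂).Adj (Sum.inl (Sum.inl v)) (Sum.inl (Sum.inr e))} = gdeg G₁ v := by
    rw [← card_inc G₁ v]
    exact Nat.card_congr (Equiv.subtypeEquivRight (fun e => Iff.rfl))
  have h3 : Nat.card {w : V₂ // (vertexSJoin G₁ G₂).Adj (Sum.inl (Sum.inl v)) (Sum.inr w)} = Nat.card V₂ :=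
    Nat.card_congr (Equiv.subtypeUnivEquiv (fun w => rfl))
  omega

lemma vsj_deg_mid (e : ↥G₁.edgeSet) :
    gdeg (vertexSJoin G₁ G₂) (Sum.inl (Sum.inr e)) = 2 := by
  rw [vsj_nbr_card]
  have h1 : Nat.card {w : V₁ // (vertexSJoin G₁ G₂).Adj (Sum.inl (Sum.inr e)) (Sum.inl (Sum.inl w))} = 2 := by
    rw [← card_mem_edge G₁ e]
    exact Nat.card_congr (Equiv.subtypeEquivRight (fun w => Iff.rfl))
  have h2 : Nat.card {f : ↥G₁.edgeSet // (vertexSJoin G₁ G₂).Adj (Sum.inl (Sum.inr e)) (Sum.inl (Sum.inr f))} = 0 := by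
    haveI : IsEmpty {f : ↥G₁.edgeSet // (vertexSJoin G₁ G₂).Adj (Sum.inl (Sum.inr e)) (Sum.inl (Sum.inr f))} :=
      ⟨fun x => x.2⟩
    exact Nat.card_of_isEmpty
  have h3 : Nat.card {w : V₂ // (vertexSJoin G₁ G₂).Adj (Sum.inl (Sum.inr e)) (Sum.inr w)} = 0 := by
    haveI : IsEmpty {w : V₂ // (vertexSJoin G₁ G₂).Adj (Sum.inl (Sum.inr e)) (Sum.inr w)} :=
      ⟨fun x => by exact absurd x.2 (by simp [vertexSJoin, joinOn])⟩
    exact Nat.card_of_isEmpty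
  omega

lemma vsj_deg_right (w : V₂) :
    gdeg (vertexSJoin G₁ G₂) (Sum.inr w) = Nat.card V₁ + gdeg G₂ w := by
  rw [vsj_nbr_card]
  have h1 : Nat.card {v : V₁ // (vertexSJoin G₁ G₂).Adj (Sum.inr w) (Sum.inl (Sum.inl v))} = Nat.card V₁ :=
    Nat.card_congr (Equiv.subtypeUnivEquiv (fun v => rfl))
  have h2 : Nat.card {e : ↥G₁.edgeSet // (vertexSJoin G₁ G₂).Adj (Sum.inr w) (Sum.inl (Sum.inr e))} = 0 := by
    haveI : IsEmpty {e : ↥G₁.edgeSet // (vertexSJoin G₁ G₂).Adj (Sum.inr w) (Sum.inl (Sum.inr e))} :=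
      ⟨fun x => by exact absurd x.2 (by simp [vertexSJoin, joinOn])⟩
    exact Nat.card_of_isEmpty
  have h3 : Nat.card {w' : V₂ // (vertexSJoin G₁ G₂).Adj (Sum.inr w) (Sum.inr w')} = gdeg G₂ w := by
    rw [gdeg_eq_ncard]
    exact Nat.card_congr (Equiv.subtypeEquivRight (fun w' => Iff.rfl))
  omega

end Degrees

end Helpers

theorem Findex_vertexSJoin {V₁ V₂ : Type*} [Finite V₁] [Finite V₂]
    (G₁ : SimpleGraph V₁) (G₂ : SimpleGraph V₂)
    (hc₁ : G₁.Connected) (hc₂ : G₂.Connected)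
    (n₁ n₂ m₁ m₂ : ℕ)
    (hn₁ : n₁ = Nat.card V₁) (hn₂ : n₂ = Nat.card V₂)
    (hm₁ : m₁ = numEdges G₁) (hm₂ : m₂ = numEdges G₂) :
    (Findex (vertexSJoin G₁ G₂) : ℤ) =
      (Findex G₁ : ℤ) + (Findex G₂ : ℤ) + 3 * (n₂ : ℤ) * (M1 G₁ : ℤ) + 3 * (n₁ : ℤ) * (M1 G₂ : ℤ)
        + 6 * (m₁ : ℤ) * (n₂ : ℤ) ^ 2 + 6 * (m₂ : ℤ) * (n₁ : ℤ) ^ 2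
        + (n₁ : ℤ) * (n₂ : ℤ) * ((n₁ : ℤ) ^ 2 + (n₂ : ℤ) ^ 2) + 8 * (m₁ : ℤ) := by
    classical
  haveI : Fintype V₁ := Fintype.ofFinite V₁
  haveI : Fintype V₂ := Fintype.ofFinite V₂
  haveI : Fintype ↥G₁.edgeSet := Fintype.ofFinite _
  have hn₁' : (Fintype.card V₁ : ℤ) = n₁ := by rw [hn₁, Nat.card_eq_fintype_card]
  have hn₂' : (Fintype.card V₂ : ℤ) = n₂ := by rw [hn₂, Nat.card_eq_fintype_card]
  have hm₁' : (Fintype.card ↥G₁.edgeSet : ℤ) = m₁ := by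
    rw [hm₁, numEdges, Nat.card_eq_fintype_card]
  have hsum₁ : (∑ v : V₁, (gdeg G₁ v : ℤ)) = 2 * m₁ := by
    rw [← Nat.cast_sum, sum_gdeg, hm₁]; push_cast; ring
  have hsum₂ : (∑ w : V₂, (gdeg G₂ w : ℤ)) = 2 * m₂ := by
    rw [← Nat.cast_sum, sum_gdeg, hm₂]; push_cast; ring
  have hFn : Findex (vertexSJoin G₁ G₂) =
      ∑ v : V₁, (gdeg G₁ v + n₂) ^ 3 + Fintype.card ↥G₁.edgeSet * 8
        + ∑ w : V₂, (n₁ + gdeg G₂ w) ^ 3 := by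
    rw [Findex_eq_sum, Fintype.sum_sum_type, Fintype.sum_sum_type]
    simp only [vsj_deg_left, vsj_deg_mid, vsj_deg_right, ← hn₁, ← hn₂]
    rw [Finset.sum_const, smul_eq_mul]
    norm_num
  have hF : (Findex (vertexSJoin G₁ G₂) : ℤ) =
      ∑ v : V₁, ((gdeg G₁ v : ℤ) + n₂) ^ 3 + (Fintype.card ↥G₁.edgeSet : ℤ) * 8
        + ∑ w : V₂, ((n₁ : ℤ) + gdeg G₂ w) ^ 3 := by
    rw [hFn]; push_cast; ring
  rw [hF, hm₁']
  have expand1 : ∑ v : V₁, ((gdeg G₁ v : ℤ) + n₂) ^ 3 =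
      ∑ v : V₁, ((gdeg G₁ v : ℤ) ^ 3 + 3 * n₂ * (gdeg G₁ v : ℤ) ^ 2
        + 3 * (n₂ : ℤ) ^ 2 * (gdeg G₁ v : ℤ) + (n₂ : ℤ) ^ 3) :=
    Finset.sum_congr rfl (fun v _ => by ring)
  have expand2 : ∑ w : V₂, ((n₁ : ℤ) + gdeg G₂ w) ^ 3 =
      ∑ w : V₂, ((gdeg G₂ w : ℤ) ^ 3 + 3 * n₁ * (gdeg G₂ w : ℤ) ^ 2
        + 3 * (n₁ : ℤ) ^ 2 * (gdeg G₂ w : ℤ) + (n₁ : ℤ) ^ 3) :=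
    Finset.sum_congr rfl (fun w _ => by ring)
  rw [expand1, expand2]
  simp only [Finset.sum_add_distrib, ← Finset.mul_sum, Finset.sum_const, nsmul_eq_mul]
  simp only [Finset.card_univ]
  rw [hsum₁, hsum₂, hn₁', hn₂']
  have hF1 : (Findex G₁ : ℤ) = ∑ v : V₁, (gdeg G₁ v : ℤ) ^ 3 := by
    rw [Findex_eq_sum]; push_cast; ring
  have hF2 : (Findex G₂ : ℤ) = ∑ w : V₂, (gdeg G₂ w : ℤ) ^ 3 := by
    rw [Findex_eq_sum]; push_cast; ring
  have hM1 : (M1 G₁ : ℤ) = ∑ v : V₁, (gdeg G₁ v : ℤ) ^ 2 := by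
    rw [M1_eq_sum]; push_cast; ring
  have hM2 : (M1 G₂ : ℤ) = ∑ w : V₂, (gdeg G₂ w : ℤ) ^ 2 := by
    rw [M1_eq_sum]; push_cast; ring
  rw [hF1, hF2, hM1, hM2]
  ring
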